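/- arXiv:2012.01807 — 5 statements merged into one kernel-verified Lean document; each statement's English description precedes it below -/
import Mathlib

section
/- The conditional mean of the standardized outcome given selection satisfies the Heckman inverse-Mills-ratio formula: ∫_{-∞}^{∞} z(y) · (1/(σ Φ(μ₂))) φ(z(y)) Φ(ζ(y)) dy = ρ φ(μ₂)/Φ(μ₂); equivalently, E(Y | U = 1) = μ₁ + ρ σ φ(μ₂)/Φ(μ₂). -/
open MeasureTheory Set

/-- Standard normal density. -/
noncomputable def phi (t : ℝ) : ℝ := Real.exp (-(t ^ 2) / 2) / Real.sqrt (2 * Real.pi)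

/-- Standard normal cumulative distribution function. -/
noncomputable def Phi (x : ℝ) : ℝ := ∫ t in Set.Iic x, phi t

lemma phi_eq (t : ℝ) : phi t = Real.exp (-(1/2) * t ^ 2) * (Real.sqrt (2 * Real.pi))⁻¹ := by
  rw [phi, div_eq_mul_inv]; ring_nf

lemma sqrt2pi_pos : 0 < Real.sqrt (2 * Real.pi) :=
  Real.sqrt_pos.2 (by positivity)

lemma phi_pos (t : ℝ) : 0 < phi t := by
  rw [phi]; positivity

lemma one_le_sqrt2pi : (1:ℝ) ≤ Real.sqrt (2 * Real.pi) := by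
  rw [show (1:ℝ) = Real.sqrt 1 by simp]
  exact Real.sqrt_le_sqrt (by nlinarith [Real.pi_gt_three])

lemma phi_le_one (t : ℝ) : phi t ≤ 1 := by
  rw [phi, div_le_one sqrt2pi_pos]
  have h1 : Real.exp (-(t ^ 2) / 2) ≤ 1 := by
    rw [Real.exp_le_one_iff]; nlinarith [sq_nonneg t]
  linarith [one_le_sqrt2pi]

lemma phi_funext : phi = fun t => Real.exp (-(1/2) * t ^ 2) * (Real.sqrt (2 * Real.pi))⁻¹ :=
  funext phi_eq

lemma continuous_phi : Continuous phi := by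
  unfold phi; fun_prop

lemma integrable_phi : Integrable phi := by
  rw [phi_funext]
  exact (integrable_exp_neg_mul_sq (by norm_num : (0:ℝ) < 1/2)).mul_const _

lemma integral_phi : ∫ t, phi t = 1 := by
  rw [phi_funext]
  rw [integral_mul_const, integral_gaussian]
  rw [show Real.pi / (1/2) = 2 * Real.pi by ring]
  exact mul_inv_cancel₀ sqrt2pi_pos.ne'

lemma Phi_nonneg (x : ℝ) : 0 ≤ Phi x :=
  setIntegral_nonneg measurableSet_Iic (fun t _ => (phi_pos t).le)

lemma Phi_le_one (x : ℝ) : Phi x ≤ 1 := by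
  rw [Phi, ← integral_phi]
  exact setIntegral_le_integral integrable_phi
    (Filter.Eventually.of_forall fun t => (phi_pos t).le)

lemma Phi_pos (x : ℝ) : 0 < Phi x := by
  rw [Phi]
  refine (setIntegral_pos_iff_support_of_nonneg_ae ?_ integrable_phi.integrableOn).2 ?_
  · exact Filter.Eventually.of_forall fun t => (phi_pos t).le
  · have : Function.support phi = Set.univ := by
      ext t; simp [Function.mem_support, (phi_pos t).ne']
    rw [this, Set.univ_inter]
    simp [Real.volume_Iic]

lemma Phi_eq (x : ℝ) : Phi x = Phi 0 + ∫ t in (0:ℝ)..x, phi t := by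
  have := intervalIntegral.integral_Iic_sub_Iic (f := phi) (μ := volume)
    (a := (0:ℝ)) (b := x) integrable_phi.integrableOn integrable_phi.integrableOn
  rw [Phi, Phi]; linarith

lemma hasDerivAt_Phi (x : ℝ) : HasDerivAt Phi (phi x) x := by
  have h : HasDerivAt (fun u => Phi 0 + ∫ t in (0:ℝ)..u, phi t) (phi x) x := by
    apply HasDerivAt.const_add
    exact intervalIntegral.integral_hasDerivAt_right
      (integrable_phi.intervalIntegrable)
      (continuous_phi.stronglyMeasurableAtFilter _ _)
      continuous_phi.continuousAt
  exact h.congr_of_eventuallyEq (Filter.Eventually.of_forall Phi_eq)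

lemma continuous_Phi : Continuous Phi :=
  continuous_iff_continuousAt.2 fun x => (hasDerivAt_Phi x).continuousAt

lemma hasDerivAt_phi (t : ℝ) : HasDerivAt phi (-t * phi t) t := by
  have h1 : HasDerivAt (fun u : ℝ => -(u ^ 2) / 2) (-t) t := by
    have := (hasDerivAt_pow 2 t).neg.div_const 2
    simpa using this.congr_deriv (by ring)
  have h2 := (h1.exp).div_const (Real.sqrt (2 * Real.pi))
  exact h2.congr_deriv (by rw [phi]; ring)

lemma integrable_id_phi : Integrable (fun t => t * phi t) := by
  rw [phi_funext]
  have := (integrable_mul_exp_neg_mul_sq (by norm_num : (0:ℝ) < 1/2)).mul_const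
    (Real.sqrt (2 * Real.pi))⁻¹
  exact this.congr (Filter.Eventually.of_forall fun t => by ring)

lemma integrable_tphiPhi (c d : ℝ) : Integrable (fun t => t * phi t * Phi (c + d * t)) := by
  refine Integrable.mono' integrable_id_phi.abs ?_ ?_
  · exact (continuous_id.mul continuous_phi |>.mul
      (continuous_Phi.comp (continuous_const.add (continuous_const.mul continuous_id)))).aestronglyMeasurable
  · refine Filter.Eventually.of_forall fun t => ?_
    have h1 : |t * phi t * Phi (c + d * t)| ≤ |t * phi t| * |Phi (c + d * t)| := by
      rw [abs_mul]
    have h2 : |Phi (c + d * t)| ≤ 1 := by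
      rw [abs_of_nonneg (Phi_nonneg _)]; exact Phi_le_one _
    calc ‖t * phi t * Phi (c + d * t)‖ = |t * phi t * Phi (c + d * t)| := rfl
      _ ≤ |t * phi t| * 1 := h1.trans (by
          exact mul_le_mul_of_nonneg_left h2 (abs_nonneg _))
      _ = |t * phi t| := by ring

lemma integrable_phiphi (c d : ℝ) : Integrable (fun t => phi t * phi (c + d * t)) := by
  refine Integrable.mono' integrable_phi ?_ ?_
  · exact (continuous_phi.mul (continuous_phi.comp
      (continuous_const.add (continuous_const.mul continuous_id)))).aestronglyMeasurable
  · refine Filter.Eventually.of_forall fun t => ?_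
    have := phi_le_one (c + d * t)
    have h1 := (phi_pos t).le
    have h2 := (phi_pos (c + d * t)).le
    calc ‖phi t * phi (c + d * t)‖ = phi t * phi (c + d * t) := by
          rw [Real.norm_eq_abs, abs_of_nonneg (mul_nonneg h1 h2)]
      _ ≤ phi t * 1 := mul_le_mul_of_nonneg_left this h1
      _ = phi t := by ring

lemma key1 (c d : ℝ) :
    ∫ t, t * phi t * Phi (c + d * t) = d * ∫ t, phi t * phi (c + d * t) := by
  have hderiv : ∀ t : ℝ, HasDerivAt (fun u => phi u * Phi (c + d * u))
      (-(t * phi t * Phi (c + d * t)) + d * (phi t * phi (c + d * t))) t := by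
    intro t
    have h1 : HasDerivAt (fun u : ℝ => c + d * u) d t := by
      simpa using (hasDerivAt_id t).const_mul d |>.const_add c
    have h2 : HasDerivAt (fun u => Phi (c + d * u)) (phi (c + d * t) * d) t :=
      HasDerivAt.comp (h₂ := Phi) t (hasDerivAt_Phi (c + d * t)) h1
    have := (hasDerivAt_phi t).mul h2
    exact this.congr_deriv (by ring)
  have hint_f' : Integrable (fun t => -(t * phi t * Phi (c + d * t)) + d * (phi t * phi (c + d * t))) :=
    ((integrable_tphiPhi c d).neg).add ((integrable_phiphi c d).const_mul d)
  have hint_f : Integrable (fun t => phi t * Phi (c + d * t)) := by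
    refine Integrable.mono' integrable_phi ?_ ?_
    · exact (continuous_phi.mul (continuous_Phi.comp
        (continuous_const.add (continuous_const.mul continuous_id)))).aestronglyMeasurable
    · refine Filter.Eventually.of_forall fun t => ?_
      have h1 := (phi_pos t).le
      calc ‖phi t * Phi (c + d * t)‖ = phi t * Phi (c + d * t) := by
            rw [Real.norm_eq_abs, abs_of_nonneg (mul_nonneg h1 (Phi_nonneg _))]
        _ ≤ phi t * 1 := mul_le_mul_of_nonneg_left (Phi_le_one _) h1
        _ = phi t := by ring
  have h0 := integral_eq_zero_of_hasDerivAt_of_integrable hderiv hint_f' hint_f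
  have h1 : ∫ (x : ℝ), -(x * phi x * Phi (c + d * x)) + d * (phi x * phi (c + d * x))
      = (∫ x : ℝ, -(x * phi x * Phi (c + d * x))) + ∫ x : ℝ, d * (phi x * phi (c + d * x)) :=
    integral_add ((integrable_tphiPhi c d).neg) ((integrable_phiphi c d).const_mul d)
  rw [h1, integral_neg, MeasureTheory.integral_const_mul] at h0
  linarith

lemma key2 (c d : ℝ) : ∫ t, phi t * phi (c + d * t)
    = phi (c / Real.sqrt (1 + d ^ 2)) / Real.sqrt (1 + d ^ 2) := by
  set a : ℝ := 1 + d ^ 2 with ha_def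
  have ha : 0 < a := by positivity
  have ha' : a ≠ 0 := ha.ne'
  have hpt : ∀ t : ℝ, phi t * phi (c + d * t) =
      (Real.exp (-(c ^ 2 / a) / 2) / (2 * Real.pi)) *
        Real.exp (-(a / 2) * (t + c * d / a) ^ 2) := by
    intro t
    have h2 : -(t ^ 2) / 2 + -((c + d * t) ^ 2) / 2
        = -(c ^ 2 / a) / 2 + -(a / 2) * (t + c * d / a) ^ 2 := by
      field_simp
      ring
    calc phi t * phi (c + d * t)
        = Real.exp (-(t ^ 2) / 2 + -((c + d * t) ^ 2) / 2) / (2 * Real.pi) := by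
          rw [phi, phi, div_mul_div_comm, Real.mul_self_sqrt (by positivity), Real.exp_add]
      _ = _ := by rw [h2, Real.exp_add]; ring
  calc (∫ t, phi t * phi (c + d * t))
      = ∫ t, (Real.exp (-(c ^ 2 / a) / 2) / (2 * Real.pi)) *
          Real.exp (-(a / 2) * (t + c * d / a) ^ 2) := by simp_rw [hpt]
    _ = (Real.exp (-(c ^ 2 / a) / 2) / (2 * Real.pi)) *
          ∫ t : ℝ, Real.exp (-(a / 2) * (t + c * d / a) ^ 2) :=
        MeasureTheory.integral_const_mul _ _
    _ = (Real.exp (-(c ^ 2 / a) / 2) / (2 * Real.pi)) *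
          ∫ t : ℝ, Real.exp (-(a / 2) * t ^ 2) := by
        rw [MeasureTheory.integral_add_right_eq_self
          (fun t : ℝ => Real.exp (-(a / 2) * t ^ 2)) (c * d / a)]
    _ = (Real.exp (-(c ^ 2 / a) / 2) / (2 * Real.pi)) * Real.sqrt (Real.pi / (a / 2)) := by
        rw [integral_gaussian]
    _ = phi (c / Real.sqrt a) / Real.sqrt a := by
        have hsa : Real.sqrt a ^ 2 = a := Real.sq_sqrt ha.le
        have hsa0 : 0 < Real.sqrt a := Real.sqrt_pos.2 ha
        have h3 : Real.pi / (a / 2) = (2 * Real.pi) / a := by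
          field_simp
        have h4 : Real.sqrt ((2 * Real.pi) / a)
            = Real.sqrt (2 * Real.pi) / Real.sqrt a := Real.sqrt_div (by positivity) a
        have h5 : (c / Real.sqrt a) ^ 2 = c ^ 2 / a := by
          rw [div_pow, hsa]
        rw [h3, h4, phi, h5]
        rw [show (2 * Real.pi) = Real.sqrt (2 * Real.pi) * Real.sqrt (2 * Real.pi) from
          (Real.mul_self_sqrt (by positivity)).symm]
        have hexp : -(c ^ 2 / a) / 2 = -(c ^ 2 / a / 2) := by ring
        rw [hexp]
        field_simp
        rw [Real.sqrt_sq (Real.sqrt_nonneg _)]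

theorem GH_conditional_mean_inverse_Mills (μ₁ μ₂ σ ρ : ℝ) (hσ : 0 < σ) (hρ₁ : -1 < ρ) (hρ₂ : ρ < 1)
    (z ζ : ℝ → ℝ)
    (hz : ∀ y, z y = (y - μ₁) / σ)
    (hζ : ∀ y, ζ y = (μ₂ + ρ * z y) / Real.sqrt (1 - ρ ^ 2)) :
    (∫ y : ℝ, z y * ((1 / (σ * Phi μ₂)) * phi (z y) * Phi (ζ y)))
      = ρ * phi μ₂ / Phi μ₂ := by
  have hρsq : ρ ^ 2 < 1 := by nlinarith
  set s : ℝ := Real.sqrt (1 - ρ ^ 2) with hs_def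
  have hs0 : 0 < s := Real.sqrt_pos.2 (by nlinarith)
  have hss : s ^ 2 = 1 - ρ ^ 2 := Real.sq_sqrt (by nlinarith)
  set c : ℝ := μ₂ / s with hc_def
  set d : ℝ := ρ / s with hd_def
  set K : ℝ := 1 / (σ * Phi μ₂) with hK_def
  have harg : ∀ t : ℝ, (μ₂ + ρ * t) / s = c + d * t := by
    intro t; rw [hc_def, hd_def]; field_simp
  set g : ℝ → ℝ := fun t => t * (K * phi t * Phi (c + d * t)) with hg_def
  have step1 : (∫ y : ℝ, z y * (K * phi (z y) * Phi (ζ y)))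
      = ∫ y : ℝ, g ((y - μ₁) / σ) := by
    congr 1; funext y
    rw [hg_def]; simp only [hz, hζ, harg]
  have step2 : (∫ y : ℝ, g ((y - μ₁) / σ)) = |σ| • ∫ t, g t := by
    calc (∫ y : ℝ, g ((y - μ₁) / σ))
        = ∫ u : ℝ, g (u / σ) := integral_sub_right_eq_self (fun u => g (u / σ)) μ₁
      _ = |σ| • ∫ t, g t := MeasureTheory.Measure.integral_comp_div g σ
  have step3 : (∫ t, g t) = K * ∫ t, t * phi t * Phi (c + d * t) := by
    rw [show g = fun t => K * (t * phi t * Phi (c + d * t)) from funext fun t => by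
      rw [hg_def]; ring]
    exact MeasureTheory.integral_const_mul _ _
  have h1d : 1 + d ^ 2 = 1 / s ^ 2 := by
    rw [hd_def]; field_simp; nlinarith [hss]
  have hsq : Real.sqrt (1 + d ^ 2) = 1 / s := by
    rw [h1d, one_div, Real.sqrt_inv, Real.sqrt_sq hs0.le, one_div]
  have hc2 : c / Real.sqrt (1 + d ^ 2) = μ₂ := by
    rw [hsq, hc_def]; field_simp
  have step4 : (∫ t, t * phi t * Phi (c + d * t)) = ρ * phi μ₂ := by
    rw [key1, key2, hc2, hsq, hd_def]
    field_simp
  rw [step1, step2, step3, step4, smul_eq_mul, abs_of_pos hσ, hK_def]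
  have hP : Phi μ₂ ≠ 0 := (Phi_pos μ₂).ne'
  field_simp
end

section
/- The conditional expectation of the hazard term given selection satisfies ∫_{-∞}^{∞} (φ(ζ(y))/Φ(ζ(y))) · (1/(σ Φ(μ₂))) φ(z(y)) Φ(ζ(y)) dy = √(1 − ρ²) φ(μ₂)/Φ(μ₂); equivalently, (1/(σ Φ(μ₂))) ∫ φ(ζ(y)) φ(z(y)) dy = √(1 − ρ²) φ(μ₂)/Φ(μ₂). -/
open MeasureTheory Set

theorem GH_hazard_conditional_mean (μ₁ μ₂ σ ρ : ℝ) (hσ : 0 < σ) (hρ₁ : -1 < ρ) (hρ₂ : ρ < 1)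
    (z ζ : ℝ → ℝ)
    (hz : ∀ y, z y = (y - μ₁) / σ)
    (hζ : ∀ y, ζ y = (μ₂ + ρ * z y) / Real.sqrt (1 - ρ ^ 2)) :
    (1 / (σ * Phi μ₂)) * ∫ y : ℝ, phi (ζ y) * phi (z y)
      = Real.sqrt (1 - ρ ^ 2) * phi μ₂ / Phi μ₂ := by
  have h1ρ : (0:ℝ) < 1 - ρ ^ 2 := by nlinarith
  have hs : Real.sqrt (1 - ρ ^ 2) ^ 2 = 1 - ρ ^ 2 := Real.sq_sqrt h1ρ.le
  have hs0 : 0 < Real.sqrt (1 - ρ ^ 2) := Real.sqrt_pos.mpr h1ρ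
  have hπ : 0 < Real.pi := Real.pi_pos
  have h2π : (0:ℝ) < Real.sqrt (2 * Real.pi) := Real.sqrt_pos.mpr (by positivity)
  set b : ℝ := 1 / (2 * σ ^ 2 * (1 - ρ ^ 2)) with hb
  have hbpos : 0 < b := by positivity
  set c : ℝ := μ₁ - σ * ρ * μ₂ with hc
  have key : ∀ y, phi (ζ y) * phi (z y)
      = (Real.exp (-(μ₂ ^ 2) / 2) / (2 * Real.pi)) * Real.exp (-b * (y - c) ^ 2) := by
    intro y
    simp only [phi, hζ, hz]
    rw [div_mul_div_comm, Real.mul_self_sqrt (by positivity), ← Real.exp_add,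
        div_mul_eq_mul_div, ← Real.exp_add]
    congr 1
    have h1 : ((μ₂ + ρ * ((y - μ₁) / σ)) / Real.sqrt (1 - ρ ^ 2)) ^ 2
        = (μ₂ + ρ * ((y - μ₁) / σ)) ^ 2 / (1 - ρ ^ 2) := by
      rw [div_pow, hs]
    rw [h1, hb, hc]
    field_simp
    ring
  have hint : (∫ y : ℝ, phi (ζ y) * phi (z y))
      = (Real.exp (-(μ₂ ^ 2) / 2) / (2 * Real.pi)) * Real.sqrt (Real.pi / b) := by
    simp only [key]
    rw [MeasureTheory.integral_const_mul]
    congr 1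
    rw [show (fun y : ℝ => Real.exp (-b * (y - c) ^ 2))
        = (fun y : ℝ => (fun x : ℝ => Real.exp (-b * x ^ 2)) (y - c)) from rfl,
      MeasureTheory.integral_sub_right_eq_self (μ := volume) (fun x : ℝ => Real.exp (-b * x ^ 2)) c,
      integral_gaussian]
  have hsqrt : Real.sqrt (Real.pi / b) = Real.sqrt (2 * Real.pi) * σ * Real.sqrt (1 - ρ ^ 2) := by
    have : Real.pi / b = (2 * Real.pi) * σ ^ 2 * (1 - ρ ^ 2) := by
      rw [hb]; field_simp
    rw [this, Real.sqrt_mul (by positivity), Real.sqrt_mul (by positivity),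
        Real.sqrt_sq hσ.le]
  rw [hint, hsqrt]
  rcases eq_or_ne (Phi μ₂) 0 with hΦ | hΦ
  · simp [hΦ]
  · have h2π' : Real.sqrt (2 * Real.pi) * Real.sqrt (2 * Real.pi) = 2 * Real.pi :=
      Real.mul_self_sqrt (by positivity)
    simp only [phi]
    rw [← h2π']
    field_simp
    ring_nf
    rw [Real.sqrt_sq (by positivity)]
end

section
/- The conditional expectation E(Z φ(ζ)/Φ(ζ) | U = 1) satisfies (1/(σ Φ(μ₂))) ∫_{-∞}^{∞} z(y) φ(ζ(y)) φ(z(y)) dy = −μ₂ ρ √(1 − ρ²) φ(μ₂)/Φ(μ₂). -/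
open MeasureTheory Set

lemma integral_mul_exp_neg_mul_sq_eq_zero {b : ℝ} (hb : 0 < b) :
    ∫ x : ℝ, x * Real.exp (-b * x ^ 2) = 0 := by
  have h := MeasureTheory.integral_neg_eq_self
    (fun x : ℝ => x * Real.exp (-b * x ^ 2)) (volume : Measure ℝ)
  simp only [neg_sq, neg_mul] at h
  rw [integral_neg] at h
  have := h
  simp only [neg_mul]
  linarith

theorem GH_z_hazard_conditional_mean (μ₁ μ₂ σ ρ : ℝ) (hσ : 0 < σ) (hρ₁ : -1 < ρ) (hρ₂ : ρ < 1)
    (z ζ : ℝ → ℝ)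
    (hz : ∀ y, z y = (y - μ₁) / σ)
    (hζ : ∀ y, ζ y = (μ₂ + ρ * z y) / Real.sqrt (1 - ρ ^ 2)) :
    (1 / (σ * Phi μ₂)) * ∫ y : ℝ, z y * phi (ζ y) * phi (z y)
      = -(μ₂ * ρ * Real.sqrt (1 - ρ ^ 2) * phi μ₂ / Phi μ₂) := by
  have h1ρ : (0:ℝ) < 1 - ρ ^ 2 := by nlinarith
  set s : ℝ := Real.sqrt (1 - ρ ^ 2) with hsdef
  have hs2 : s ^ 2 = 1 - ρ ^ 2 := Real.sq_sqrt h1ρ.le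
  have hspos : 0 < s := Real.sqrt_pos.mpr h1ρ
  have hsq2π : Real.sqrt (2 * Real.pi) ^ 2 = 2 * Real.pi :=
    Real.sq_sqrt (by positivity)
  have hsq2πpos : 0 < Real.sqrt (2 * Real.pi) := Real.sqrt_pos.mpr (by positivity)
  set v : ℝ := σ ^ 2 * (1 - ρ ^ 2) with hvdef
  have hv : 0 < v := by positivity
  set b : ℝ := (2 * v)⁻¹ with hbdef
  have hb : 0 < b := by positivity
  set m : ℝ := μ₁ - σ * (μ₂ * ρ) with hmdef
  set C : ℝ := phi μ₂ / (Real.sqrt (2 * Real.pi) * σ) with hCdef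
  set D : ℝ := -(μ₂ * ρ) * phi μ₂ / Real.sqrt (2 * Real.pi) with hDdef
  -- pointwise identity
  have hpt : ∀ y : ℝ, z y * phi (ζ y) * phi (z y)
      = C * ((y - m) * Real.exp (-b * (y - m) ^ 2))
        + D * Real.exp (-b * (y - m) ^ 2) := by
    intro y
    have hexp : -((ζ y) ^ 2) / 2 + -((z y) ^ 2) / 2
        = -(μ₂ ^ 2) / 2 + -b * (y - m) ^ 2 := by
      rw [hζ y, hz y, div_pow, hs2, hbdef, hvdef, hmdef]
      field_simp
      ring
    have hcomb : Real.exp (-((ζ y) ^ 2) / 2) * Real.exp (-((z y) ^ 2) / 2)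
        = Real.exp (-(μ₂ ^ 2) / 2) * Real.exp (-b * (y - m) ^ 2) := by
      rw [← Real.exp_add, ← Real.exp_add, hexp]
    have hzy : z y = (y - m) / σ - μ₂ * ρ := by
      rw [hz y, hmdef]; field_simp; ring
    simp only [phi, hCdef, hDdef]
    rw [mul_assoc, div_mul_div_comm, hcomb, hzy]
    field_simp
    ring
  -- integrability
  have hint1 : Integrable (fun y : ℝ => (y - m) * Real.exp (-b * (y - m) ^ 2)) := by
    exact (integrable_mul_exp_neg_mul_sq hb).comp_sub_right m
  have hint2 : Integrable (fun y : ℝ => Real.exp (-b * (y - m) ^ 2)) := by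
    exact (integrable_exp_neg_mul_sq hb).comp_sub_right m
  have hI : ∫ y : ℝ, z y * phi (ζ y) * phi (z y)
      = C * (∫ y : ℝ, (y - m) * Real.exp (-b * (y - m) ^ 2))
        + D * (∫ y : ℝ, Real.exp (-b * (y - m) ^ 2)) := by
    have h0 : ∫ y : ℝ, z y * phi (ζ y) * phi (z y)
        = ∫ y : ℝ, (C * ((y - m) * Real.exp (-b * (y - m) ^ 2))
          + D * Real.exp (-b * (y - m) ^ 2)) :=
      integral_congr_ae (Filter.Eventually.of_forall hpt)
    rw [h0, integral_add ((hint1).const_mul C) ((hint2).const_mul D),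
      integral_const_mul, integral_const_mul]
  have hI1 : ∫ y : ℝ, (y - m) * Real.exp (-b * (y - m) ^ 2) = 0 := by
    have ht := MeasureTheory.integral_sub_right_eq_self
      (fun x : ℝ => x * Real.exp (-b * x ^ 2)) m (μ := volume)
    rw [ht]
    exact integral_mul_exp_neg_mul_sq_eq_zero hb
  have hI2 : ∫ y : ℝ, Real.exp (-b * (y - m) ^ 2)
      = Real.sqrt (2 * Real.pi) * (σ * s) := by
    have ht := MeasureTheory.integral_sub_right_eq_self
      (fun x : ℝ => Real.exp (-b * x ^ 2)) m (μ := volume)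
    rw [ht, integral_gaussian]
    rw [show Real.pi / b = (2 * Real.pi) * (σ * s) ^ 2 by
      rw [hbdef, hvdef, ← hs2]; field_simp]
    rw [Real.sqrt_mul (by positivity), Real.sqrt_sq (by positivity)]
  have hmain : ∫ y : ℝ, z y * phi (ζ y) * phi (z y)
      = σ * (-(μ₂ * ρ * s * phi μ₂)) := by
    rw [hI, hI1, hI2, hDdef]
    field_simp
    ring
  rw [hmain, one_div, mul_inv, div_eq_mul_inv]
  rw [show σ⁻¹ * (Phi μ₂)⁻¹ * (σ * -(μ₂ * ρ * s * phi μ₂))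
      = (σ⁻¹ * σ) * -(μ₂ * ρ * s * phi μ₂ * (Phi μ₂)⁻¹) by ring,
    inv_mul_cancel₀ hσ.ne', one_mul]
end

section
/- The sample-selection-bias-component (ρ-component) of the score function of the generalized Heckman model has conditional mean zero given selection: ∫_{-∞}^{∞} (z(y) + ρ μ₂) φ(ζ(y)) φ(z(y)) dy = 0. -/
open MeasureTheory Set

theorem GH_rho_score_conditional_mean_zero (μ₁ μ₂ σ ρ : ℝ) (hσ : 0 < σ) (hρ₁ : -1 < ρ) (hρ₂ : ρ < 1)
    (z ζ : ℝ → ℝ)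
    (hz : ∀ y, z y = (y - μ₁) / σ)
    (hζ : ∀ y, ζ y = (μ₂ + ρ * z y) / Real.sqrt (1 - ρ ^ 2)) :
    (∫ y : ℝ, (z y + ρ * μ₂) * phi (ζ y) * phi (z y)) = 0 := by
  have hσ' : σ ≠ 0 := ne_of_gt hσ
  have hρs : (0:ℝ) < 1 - ρ ^ 2 := by nlinarith
  have hss : (Real.sqrt (1 - ρ ^ 2)) ^ 2 = 1 - ρ ^ 2 := Real.sq_sqrt hρs.le
  set c : ℝ := 2 * (μ₁ - σ * ρ * μ₂) with hc
  set f : ℝ → ℝ := fun y => (z y + ρ * μ₂) * phi (ζ y) * phi (z y) with hf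
  have hprod : ∀ a b a' b' : ℝ, a ^ 2 + b ^ 2 = a' ^ 2 + b' ^ 2 →
      phi a * phi b = phi a' * phi b' := by
    intro a b a' b' h
    unfold phi
    rw [div_mul_div_comm, div_mul_div_comm, ← Real.exp_add, ← Real.exp_add,
      show -(a ^ 2) / 2 + -(b ^ 2) / 2 = -(a ^ 2 + b ^ 2) / 2 by ring,
      show -(a' ^ 2) / 2 + -(b' ^ 2) / 2 = -(a' ^ 2 + b' ^ 2) / 2 by ring, h]
  have key : ∀ y, f (c - y) = - f y := by
    intro y
    have hz1 : z (c - y) = -(z y) - 2 * ρ * μ₂ := by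
      rw [hz, hz]; field_simp; ring
    have hsq : (ζ (c - y)) ^ 2 + (z (c - y)) ^ 2 = (ζ y) ^ 2 + (z y) ^ 2 := by
      rw [hζ, hζ, hz1, div_pow, div_pow, hss]
      field_simp
      ring
    have hph := hprod _ _ _ _ hsq
    have h3 : f (c - y) = (-(z y + ρ * μ₂)) * (phi (ζ (c - y)) * phi (z (c - y))) := by
      simp only [hf]; rw [hz1]; ring
    rw [h3, hph]
    simp only [hf]; ring
  have h1 : (∫ y : ℝ, f (c - y)) = ∫ y : ℝ, f y :=
    integral_sub_left_eq_self f volume c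
  have h2 : (∫ y : ℝ, f (c - y)) = - ∫ y : ℝ, f y := by
    simp_rw [key]
    exact integral_neg f
  have h3 : (∫ y : ℝ, f y) = - ∫ y : ℝ, f y := h1 ▸ h2
  linarith
end

section
/- For all real numbers a and b, ∫_{-∞}^{∞} t φ(t) φ(a + b t) dt = −(a b/(1 + b²)^{3/2}) φ(a/√(1 + b²)). -/
open MeasureTheory Set

lemma odd_gauss_int (s : ℝ) : ∫ u : ℝ, u * Real.exp (-(s/2) * u ^ 2) = 0 := by
  have h := MeasureTheory.integral_neg_eq_self
    (fun u : ℝ => u * Real.exp (-(s/2) * u ^ 2)) (volume : Measure ℝ)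
  have h2 : (∫ x : ℝ, (-x) * Real.exp (-(s/2) * (-x) ^ 2))
      = ∫ x : ℝ, -(x * Real.exp (-(s/2) * x ^ 2)) := by
    congr 1; funext x; rw [neg_sq]; ring
  rw [h2, integral_neg] at h
  linarith

theorem gaussian_product_first_moment (a b : ℝ) :
    ∫ t : ℝ, t * phi t * phi (a + b * t)
      = -(a * b / (1 + b ^ 2) ^ ((3 : ℝ) / 2)) * phi (a / Real.sqrt (1 + b ^ 2)) := by
  set s : ℝ := 1 + b ^ 2 with hs_def
  have hs : 0 < s := by positivity
  set c : ℝ := a * b / s with hc_def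
  set K : ℝ := Real.exp (-(a ^ 2) / (2 * s)) / (2 * Real.pi) with hK_def
  have h2pi : (0:ℝ) < 2 * Real.pi := by positivity
  have hsq : Real.sqrt (2 * Real.pi) * Real.sqrt (2 * Real.pi) = 2 * Real.pi :=
    Real.mul_self_sqrt h2pi.le
  have key : ∀ t : ℝ, t * phi t * phi (a + b * t)
      = ((t + c) - c) * (K * Real.exp (-(s/2) * (t + c) ^ 2)) := by
    intro t
    have hexp : Real.exp (-(t ^ 2) / 2) * Real.exp (-((a + b * t) ^ 2) / 2)
        = Real.exp (-(a ^ 2) / (2 * s)) * Real.exp (-(s/2) * (t + c) ^ 2) := by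
      rw [← Real.exp_add, ← Real.exp_add]
      congr 1
      field_simp [hc_def]
      rw [hc_def]; field_simp; rw [hs_def]; ring
    simp only [phi]
    rw [mul_assoc, div_mul_div_comm, hsq, hexp, hK_def]
    ring
  simp only [key]
  rw [MeasureTheory.integral_add_right_eq_self
    (fun u : ℝ => (u - c) * (K * Real.exp (-(s/2) * u ^ 2))) c]
  have hint1 : Integrable (fun u : ℝ => u * Real.exp (-(s/2) * u ^ 2)) :=
    integrable_mul_exp_neg_mul_sq (by linarith)
  have hint2 : Integrable (fun u : ℝ => Real.exp (-(s/2) * u ^ 2)) :=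
    integrable_exp_neg_mul_sq (by linarith)
  have split : (fun u : ℝ => (u - c) * (K * Real.exp (-(s/2) * u ^ 2)))
      = fun u : ℝ => K * (u * Real.exp (-(s/2) * u ^ 2))
        - (K * c) * Real.exp (-(s/2) * u ^ 2) := by
    funext u; ring
  rw [split, integral_sub ((hint1.const_mul K)) (hint2.const_mul (K * c)),
    integral_const_mul, integral_const_mul, odd_gauss_int s, mul_zero,
    integral_gaussian, zero_sub]
  have hsqrt_s : (0:ℝ) < Real.sqrt s := Real.sqrt_pos.mpr hs
  have hss : Real.sqrt s * Real.sqrt s = s := Real.mul_self_sqrt hs.le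
  have hphi : phi (a / Real.sqrt s) = Real.exp (-(a ^ 2) / (2 * s)) / Real.sqrt (2 * Real.pi) := by
    simp only [phi]
    rw [div_pow, Real.sq_sqrt hs.le]
    congr 2
    field_simp
  have hrpow : s ^ ((3:ℝ)/2) = s * Real.sqrt s := by
    rw [show (3:ℝ)/2 = 1 + 1/2 by norm_num, Real.rpow_add hs, Real.rpow_one,
      ← Real.sqrt_eq_rpow]
  have h1 : Real.sqrt (Real.pi / (s/2)) = Real.sqrt (2 * Real.pi) / Real.sqrt s := by
    rw [show Real.pi / (s/2) = (2 * Real.pi) / s by field_simp,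
      Real.sqrt_div h2pi.le]
  rw [hphi, hrpow, h1, hK_def, hc_def]
  set E := Real.exp (-(a ^ 2) / (2 * s)) with hE
  set P := Real.sqrt (2 * Real.pi) with hP
  set S := Real.sqrt s with hS
  have hPne : P ≠ 0 := by rw [hP]; positivity
  have hSne : S ≠ 0 := ne_of_gt hsqrt_s
  rw [← hsq, ← hss]
  field_simp
end
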